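/- arXiv:1512.01770 — 8 statements merged into one kernel-verified Lean document; each statement's English description precedes it below -/
import Mathlib

section
/- Let α, β, γ ∈ (0, π/2], δ ∈ (0, π/4], and set X = cos α · cos β · cos γ · sin(2δ). Then (1 + X)^2 - [sin²α·sin²β·sin²γ·sin²(2δ) + (cos²α + 2cos²β·cos²γ - cos²β - cos²γ)·sin²(2δ) - X²] ≥ (1+X)²·(1 - sin²(2δ)) ≥ 0. -/
theorem ghzR_tangle_key_inequality (α β γ δ : ℝ)
    (hα : α ∈ Set.Ioc 0 (Real.pi / 2)) (hβ : β ∈ Set.Ioc 0 (Real.pi / 2))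
    (hγ : γ ∈ Set.Ioc 0 (Real.pi / 2)) (hδ : δ ∈ Set.Ioc 0 (Real.pi / 4)) :
    (1 + Real.cos α * Real.cos β * Real.cos γ * Real.sin (2 * δ)) ^ 2 -
        (Real.sin α ^ 2 * Real.sin β ^ 2 * Real.sin γ ^ 2 * Real.sin (2 * δ) ^ 2 +
          (Real.cos α ^ 2 + 2 * Real.cos β ^ 2 * Real.cos γ ^ 2 -
            Real.cos β ^ 2 - Real.cos γ ^ 2) * Real.sin (2 * δ) ^ 2 -
          (Real.cos α * Real.cos β * Real.cos γ * Real.sin (2 * δ)) ^ 2) ≥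
      (1 + Real.cos α * Real.cos β * Real.cos γ * Real.sin (2 * δ)) ^ 2 *
        (1 - Real.sin (2 * δ) ^ 2) ∧
    (1 + Real.cos α * Real.cos β * Real.cos γ * Real.sin (2 * δ)) ^ 2 *
        (1 - Real.sin (2 * δ) ^ 2) ≥ 0 := by
  obtain ⟨hα1, hα2⟩ := hα
  obtain ⟨hβ1, hβ2⟩ := hβ
  obtain ⟨hγ1, hγ2⟩ := hγ
  obtain ⟨hδ1, hδ2⟩ := hδ
  have hpi := Real.pi_pos
  have ha0 : 0 ≤ Real.cos α := Real.cos_nonneg_of_mem_Icc ⟨by linarith, hα2⟩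
  have hb0 : 0 ≤ Real.cos β := Real.cos_nonneg_of_mem_Icc ⟨by linarith, hβ2⟩
  have hc0 : 0 ≤ Real.cos γ := Real.cos_nonneg_of_mem_Icc ⟨by linarith, hγ2⟩
  have ha1 : Real.cos α ≤ 1 := Real.cos_le_one α
  have hb1 : Real.cos β ≤ 1 := Real.cos_le_one β
  have hc1 : Real.cos γ ≤ 1 := Real.cos_le_one γ
  have hs0 : 0 ≤ Real.sin (2 * δ) := Real.sin_nonneg_of_nonneg_of_le_pi
    (by linarith) (by linarith)
  have hs1 : Real.sin (2 * δ) ≤ 1 := Real.sin_le_one _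
  set a := Real.cos α
  set b := Real.cos β
  set c := Real.cos γ
  set s := Real.sin (2 * δ)
  have hsa : Real.sin α ^ 2 = 1 - a ^ 2 := Real.sin_sq α
  have hsb : Real.sin β ^ 2 = 1 - b ^ 2 := Real.sin_sq β
  have hsc : Real.sin γ ^ 2 = 1 - c ^ 2 := Real.sin_sq γ
  constructor
  · rw [hsa, hsb, hsc]
    have hA : (0:ℝ) ≤ 1 - a^2 := by nlinarith [ha0, ha1]
    have hB : (0:ℝ) ≤ 1 - b^2 := by nlinarith [hb0, hb1]
    have hC : (0:ℝ) ≤ 1 - c^2 := by nlinarith [hc0, hc1]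
    have h1 : 0 ≤ s^2 * ((1-a^2)*(b^2*(1-c^2)+c^2*(1-b^2))) :=
      mul_nonneg (sq_nonneg s) (mul_nonneg hA (add_nonneg (mul_nonneg (sq_nonneg b) hC)
        (mul_nonneg (sq_nonneg c) hB)))
    have h2 : 0 ≤ s^2 * (b^2*(1-c^2)+c^2) :=
      mul_nonneg (sq_nonneg s) (add_nonneg (mul_nonneg (sq_nonneg b) hC) (sq_nonneg c))
    have h3 : 0 ≤ s^2 * (a*b*c*s) :=
      mul_nonneg (sq_nonneg s) (mul_nonneg (mul_nonneg (mul_nonneg ha0 hb0) hc0) hs0)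
    have h4 : 0 ≤ s^2 * (a*b*c*s)^2 := mul_nonneg (sq_nonneg s) (sq_nonneg _)
    nlinarith [h1, h2, h3, h4]
  · have hs2 : 1 - s ^ 2 ≥ 0 := by nlinarith [hs0, hs1]
    exact mul_nonneg (sq_nonneg _) hs2
end

section
/- Let α, β, γ ∈ (0, π/2], δ ∈ (0, π/4], and X = cos α cos β cos γ sin(2δ). Then the complementarity relation τ + B ≤ 1 holds, where τ = sin²α·sin²β·sin²γ·sin²(2δ)/(1+X)² and B = max{0, ((cos²α - cos²β - cos²γ + 2cos²β·cos²γ)·sin²(2δ) - X²)/(1+X)²}. -/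
set_option maxHeartbeats 1000000

lemma ghz_key (a b c s : ℝ) (ha0 : 0 ≤ a) (ha1 : a ≤ 1)
    (hb0 : 0 ≤ b) (hb1 : b ≤ 1) (hc0 : 0 ≤ c) (hc1 : c ≤ 1)
    (hs0 : 0 ≤ s) (hs1 : s ≤ 1) :
    (1 - a^2) * (1 - b^2) * (1 - c^2) * s^2 +
      ((a^2 - b^2 - c^2 + 2*b^2*c^2) * s^2 - (a*b*c*s)^2) ≤ (1 + a*b*c*s)^2 := by
  have h1 : (2 - a^2) * (b^2 + c^2) - (3 - 2*a^2) * (b^2*c^2) ≥ 0 := by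
    nlinarith [mul_nonneg (mul_nonneg hb0 hb0) (mul_nonneg hc0 hc0),
      mul_nonneg (sub_nonneg.2 (by nlinarith : a^2 ≤ 1))
        (by nlinarith [mul_nonneg (mul_nonneg hb0 hb0) (sub_nonneg.2 (by nlinarith : c^2 ≤ 1)),
            mul_nonneg (mul_nonneg hc0 hc0) (sub_nonneg.2 (by nlinarith : b^2 ≤ 1))] :
          (0:ℝ) ≤ b^2 + c^2 - 2*(b^2*c^2)),
      mul_nonneg (mul_nonneg hb0 hb0) (sub_nonneg.2 (by nlinarith : c^2 ≤ 1)),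
      mul_nonneg (mul_nonneg hc0 hc0) (sub_nonneg.2 (by nlinarith : b^2 ≤ 1))]
  nlinarith [mul_nonneg (mul_nonneg (mul_nonneg ha0 hb0) hc0) hs0,
    mul_nonneg (mul_nonneg hs0 hs0) h1,
    mul_nonneg (sub_nonneg.2 (by nlinarith : s^2 ≤ 1)) h1, sq_nonneg s]

theorem ghzR_tangle_bell_complementarity (α β γ δ : ℝ)
    (hα : α ∈ Set.Ioc 0 (Real.pi / 2)) (hβ : β ∈ Set.Ioc 0 (Real.pi / 2))
    (hγ : γ ∈ Set.Ioc 0 (Real.pi / 2)) (hδ : δ ∈ Set.Ioc 0 (Real.pi / 4)) :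
    Real.sin α ^ 2 * Real.sin β ^ 2 * Real.sin γ ^ 2 * Real.sin (2 * δ) ^ 2 /
        (1 + Real.cos α * Real.cos β * Real.cos γ * Real.sin (2 * δ)) ^ 2 +
      max 0
        (((Real.cos α ^ 2 - Real.cos β ^ 2 - Real.cos γ ^ 2 +
            2 * Real.cos β ^ 2 * Real.cos γ ^ 2) * Real.sin (2 * δ) ^ 2 -
          (Real.cos α * Real.cos β * Real.cos γ * Real.sin (2 * δ)) ^ 2) /
          (1 + Real.cos α * Real.cos β * Real.cos γ * Real.sin (2 * δ)) ^ 2) ≤ 1 := by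
  obtain ⟨hα0, hα2⟩ := hα
  obtain ⟨hβ0, hβ2⟩ := hβ
  obtain ⟨hγ0, hγ2⟩ := hγ
  obtain ⟨hδ0, hδ2⟩ := hδ
  have hpi := Real.pi_pos
  set a := Real.cos α with ha
  set b := Real.cos β with hb
  set c := Real.cos γ with hc
  set s := Real.sin (2 * δ) with hs
  have ha0 : 0 ≤ a := Real.cos_nonneg_of_mem_Icc ⟨by linarith, hα2⟩
  have hb0 : 0 ≤ b := Real.cos_nonneg_of_mem_Icc ⟨by linarith, hβ2⟩
  have hc0 : 0 ≤ c := Real.cos_nonneg_of_mem_Icc ⟨by linarith, hγ2⟩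
  have ha1 : a ≤ 1 := Real.cos_le_one α
  have hb1 : b ≤ 1 := Real.cos_le_one β
  have hc1 : c ≤ 1 := Real.cos_le_one γ
  have hs0 : 0 ≤ s := Real.sin_nonneg_of_nonneg_of_le_pi (by linarith) (by linarith)
  have hs1 : s ≤ 1 := Real.sin_le_one _
  have hsa : Real.sin α ^ 2 = 1 - a ^ 2 := by
    rw [ha]; nlinarith [Real.sin_sq_add_cos_sq α]
  have hsb : Real.sin β ^ 2 = 1 - b ^ 2 := by
    rw [hb]; nlinarith [Real.sin_sq_add_cos_sq β]
  have hsc : Real.sin γ ^ 2 = 1 - c ^ 2 := by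
    rw [hc]; nlinarith [Real.sin_sq_add_cos_sq γ]
  have hD : (0:ℝ) < (1 + a*b*c*s)^2 := by positivity
  have habcs : 0 ≤ a*b*c*s := by positivity
  rcases le_total (((a ^ 2 - b ^ 2 - c ^ 2 + 2 * b ^ 2 * c ^ 2) * s ^ 2 -
      (a * b * c * s) ^ 2) / (1 + a * b * c * s) ^ 2) 0 with h | h
  · rw [max_eq_left h]
    rw [add_zero, div_le_one hD, hsa, hsb, hsc]
    nlinarith [mul_nonneg (sub_nonneg.2 (by nlinarith : a^2 ≤ 1))
        (sub_nonneg.2 (by nlinarith : b^2 ≤ 1)),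
      mul_nonneg (mul_nonneg (sub_nonneg.2 (by nlinarith : a^2 ≤ 1))
        (sub_nonneg.2 (by nlinarith : b^2 ≤ 1))) (sub_nonneg.2 (by nlinarith : c^2 ≤ 1)),
      sq_nonneg s, mul_nonneg habcs habcs,
      mul_nonneg (mul_nonneg (mul_nonneg (sub_nonneg.2 (by nlinarith : a^2 ≤ 1))
        (sub_nonneg.2 (by nlinarith : b^2 ≤ 1))) (sub_nonneg.2 (by nlinarith : c^2 ≤ 1)))
        (sub_nonneg.2 (by nlinarith : s^2 ≤ 1))]
  · rw [max_eq_right h, hsa, hsb, hsc, ← add_div, div_le_one hD]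
    exact ghz_key a b c s ha0 ha1 hb0 hb1 hc0 hc1 hs0 hs1
end

section
/- Let α, β, γ ∈ (0, π/2], δ ∈ (0, π/4], X = cos α cos β cos γ sin(2δ), and define g_A = (1 + √(1 + sin²α(cos²β cos²γ - 1)sin²(2δ)/(1+X)²))/2 and g_B analogously with α and β exchanged. Then g_A ≥ g_B if and only if (cos²α - cos²β)·sin²γ ≥ 0. -/
set_option maxHeartbeats 1000000


theorem ghzR_ggm_eigenvalue_comparison (α β γ δ : ℝ)
    (hα : α ∈ Set.Ioc 0 (Real.pi / 2)) (hβ : β ∈ Set.Ioc 0 (Real.pi / 2))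
    (hγ : γ ∈ Set.Ioc 0 (Real.pi / 2)) (hδ : δ ∈ Set.Ioc 0 (Real.pi / 4)) :
    ((1 + Real.sqrt (1 + Real.sin α ^ 2 * (Real.cos β ^ 2 * Real.cos γ ^ 2 - 1) *
          Real.sin (2 * δ) ^ 2 /
          (1 + Real.cos α * Real.cos β * Real.cos γ * Real.sin (2 * δ)) ^ 2)) / 2 ≥
      (1 + Real.sqrt (1 + Real.sin β ^ 2 * (Real.cos α ^ 2 * Real.cos γ ^ 2 - 1) *
          Real.sin (2 * δ) ^ 2 /
          (1 + Real.cos α * Real.cos β * Real.cos γ * Real.sin (2 * δ)) ^ 2)) / 2) ↔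
    (Real.cos α ^ 2 - Real.cos β ^ 2) * Real.sin γ ^ 2 ≥ 0 := by
  obtain ⟨hα0, hα1⟩ := hα
  obtain ⟨hβ0, hβ1⟩ := hβ
  obtain ⟨hγ0, hγ1⟩ := hγ
  obtain ⟨hδ0, hδ1⟩ := hδ
  have hπ : (0:ℝ) < Real.pi := Real.pi_pos
  have hcα : 0 ≤ Real.cos α := Real.cos_nonneg_of_mem_Icc ⟨by linarith, hα1⟩
  have hcβ : 0 ≤ Real.cos β := Real.cos_nonneg_of_mem_Icc ⟨by linarith, hβ1⟩
  have hcγ : 0 ≤ Real.cos γ := Real.cos_nonneg_of_mem_Icc ⟨by linarith, hγ1⟩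
  have hs2δ : 0 < Real.sin (2 * δ) :=
    Real.sin_pos_of_pos_of_lt_pi (by linarith) (by linarith)
  set s := Real.sin (2 * δ) with hs
  set X := Real.cos α * Real.cos β * Real.cos γ * s with hX
  have hX0 : 0 ≤ X := by positivity
  have hD0 : (0:ℝ) < (1 + X) ^ 2 := by positivity
  set D := (1 + X) ^ 2 with hDdef
  have hsa : Real.sin α ^ 2 = 1 - Real.cos α ^ 2 := by
    nlinarith [Real.sin_sq_add_cos_sq α]
  have hsb : Real.sin β ^ 2 = 1 - Real.cos β ^ 2 := by
    nlinarith [Real.sin_sq_add_cos_sq β]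
  have hsc : Real.sin γ ^ 2 = 1 - Real.cos γ ^ 2 := by
    nlinarith [Real.sin_sq_add_cos_sq γ]
  set nA := Real.sin α ^ 2 * (Real.cos β ^ 2 * Real.cos γ ^ 2 - 1) * s ^ 2 with hnA
  set nB := Real.sin β ^ 2 * (Real.cos α ^ 2 * Real.cos γ ^ 2 - 1) * s ^ 2 with hnB
  -- nonnegativity of the radicands
  have hs1 : s ≤ 1 := Real.sin_le_one _
  have hD1 : 1 ≤ D := by rw [hDdef]; nlinarith [hX0]
  have hrad : ∀ n : ℝ, -1 ≤ n → 0 ≤ 1 + n * s ^ 2 / D := by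
    intro n hn
    have h1 : -(n * s ^ 2) ≤ D := by nlinarith
    have : -(n * s ^ 2 / D) ≤ 1 := by
      rw [← neg_div]
      exact div_le_one_of_le₀ h1 (le_of_lt hD0)
    linarith
  have hA0 : 0 ≤ 1 + nA / D := by
    have := hrad (Real.sin α ^ 2 * (Real.cos β ^ 2 * Real.cos γ ^ 2 - 1))
      (by nlinarith [Real.sin_sq_add_cos_sq α, sq_nonneg (Real.cos β * Real.cos γ),
        sq_nonneg (Real.sin α), sq_nonneg (Real.cos α)])
    rw [hnA]; linarith [this]
  have hB0 : 0 ≤ 1 + nB / D := by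
    have := hrad (Real.sin β ^ 2 * (Real.cos α ^ 2 * Real.cos γ ^ 2 - 1))
      (by nlinarith [Real.sin_sq_add_cos_sq β, sq_nonneg (Real.cos α * Real.cos γ),
        sq_nonneg (Real.sin β), sq_nonneg (Real.cos β)])
    rw [hnB]; linarith [this]
  have hAA : Real.sin α ^ 2 * (Real.cos β ^ 2 * Real.cos γ ^ 2 - 1) * s ^ 2 / D = nA / D := by
    rw [hnA]
  have hBB : Real.sin β ^ 2 * (Real.cos α ^ 2 * Real.cos γ ^ 2 - 1) * s ^ 2 / D = nB / D := by
    rw [hnB]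
  -- key algebraic identity
  have hkey : (1 + nA / D) - (1 + nB / D) =
      (Real.cos α ^ 2 - Real.cos β ^ 2) * Real.sin γ ^ 2 * (s ^ 2 / D) := by
    rw [hnA, hnB, hsa, hsb, hsc]
    field_simp
    ring
  have hk : 0 < s ^ 2 / D := by positivity
  rw [hAA, hBB]
  constructor
  · intro h
    have hsq : Real.sqrt (1 + nB / D) ≤ Real.sqrt (1 + nA / D) := by linarith
    have hAB : 1 + nB / D ≤ 1 + nA / D := by
      by_contra hc
      push_neg at hc
      have := Real.sqrt_lt_sqrt hA0 hc
      linarith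
    have : 0 ≤ (Real.cos α ^ 2 - Real.cos β ^ 2) * Real.sin γ ^ 2 * (s ^ 2 / D) := by
      linarith [hkey]
    exact le_of_mul_le_mul_right (by linarith [this]) hk
  · intro h
    have h2 : 0 ≤ (Real.cos α ^ 2 - Real.cos β ^ 2) * Real.sin γ ^ 2 * (s ^ 2 / D) :=
      mul_nonneg h (le_of_lt hk)
    have hAB : 1 + nB / D ≤ 1 + nA / D := by linarith [hkey]
    have := Real.sqrt_le_sqrt hAB
    linarith
end

section
/- Let α, β, γ ∈ (0, π/2], δ ∈ (0, π/4], X = cos α cos β cos γ sin(2δ). If (cos²α - cos²β)·sin²γ ≥ 0 and (cos²α - cos²γ)·sin²β ≥ 0, then M(ρ_BC) ≥ M(ρ_AC) and M(ρ_BC) ≥ M(ρ_AB), where M(ρ_BC) = 1 + ((cos²α - cos²β - cos²γ + 2cos²β cos²γ)sin²(2δ) - X²)/(1+X)², M(ρ_AC) = 1 + ((cos²β - cos²α - cos²γ + 2cos²α cos²γ)sin²(2δ) - X²)/(1+X)², M(ρ_AB) = 1 + ((cos²γ - cos²α - cos²β + 2cos²α cos²β)sin²(2δ) - X²)/(1+X)².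 -/
theorem ghzR_lemma1_bell_ordering (α β γ δ : ℝ)
    (hα : α ∈ Set.Ioc 0 (Real.pi / 2)) (hβ : β ∈ Set.Ioc 0 (Real.pi / 2))
    (hγ : γ ∈ Set.Ioc 0 (Real.pi / 2)) (hδ : δ ∈ Set.Ioc 0 (Real.pi / 4))
    (h1 : (Real.cos α ^ 2 - Real.cos β ^ 2) * Real.sin γ ^ 2 ≥ 0)
    (h2 : (Real.cos α ^ 2 - Real.cos γ ^ 2) * Real.sin β ^ 2 ≥ 0) :
    (1 + ((Real.cos α ^ 2 - Real.cos β ^ 2 - Real.cos γ ^ 2 +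
          2 * Real.cos β ^ 2 * Real.cos γ ^ 2) * Real.sin (2 * δ) ^ 2 -
        (Real.cos α * Real.cos β * Real.cos γ * Real.sin (2 * δ)) ^ 2) /
        (1 + Real.cos α * Real.cos β * Real.cos γ * Real.sin (2 * δ)) ^ 2 ≥
      1 + ((Real.cos β ^ 2 - Real.cos α ^ 2 - Real.cos γ ^ 2 +
          2 * Real.cos α ^ 2 * Real.cos γ ^ 2) * Real.sin (2 * δ) ^ 2 -
        (Real.cos α * Real.cos β * Real.cos γ * Real.sin (2 * δ)) ^ 2) /
        (1 + Real.cos α * Real.cos β * Real.cos γ * Real.sin (2 * δ)) ^ 2) ∧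
    (1 + ((Real.cos α ^ 2 - Real.cos β ^ 2 - Real.cos γ ^ 2 +
          2 * Real.cos β ^ 2 * Real.cos γ ^ 2) * Real.sin (2 * δ) ^ 2 -
        (Real.cos α * Real.cos β * Real.cos γ * Real.sin (2 * δ)) ^ 2) /
        (1 + Real.cos α * Real.cos β * Real.cos γ * Real.sin (2 * δ)) ^ 2 ≥
      1 + ((Real.cos γ ^ 2 - Real.cos α ^ 2 - Real.cos β ^ 2 +
          2 * Real.cos α ^ 2 * Real.cos β ^ 2) * Real.sin (2 * δ) ^ 2 -
        (Real.cos α * Real.cos β * Real.cos γ * Real.sin (2 * δ)) ^ 2) /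
        (1 + Real.cos α * Real.cos β * Real.cos γ * Real.sin (2 * δ)) ^ 2) := by
  have hca : 0 ≤ Real.cos α := Real.cos_nonneg_of_mem_Icc
    ⟨by linarith [hα.1, Real.pi_pos], hα.2⟩
  have hcb : 0 ≤ Real.cos β := Real.cos_nonneg_of_mem_Icc
    ⟨by linarith [hβ.1, Real.pi_pos], hβ.2⟩
  have hcg : 0 ≤ Real.cos γ := Real.cos_nonneg_of_mem_Icc
    ⟨by linarith [hγ.1, Real.pi_pos], hγ.2⟩
  have hs2 : 0 ≤ Real.sin (2 * δ) := Real.sin_nonneg_of_nonneg_of_le_pi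
    (by linarith [hδ.1]) (by linarith [hδ.2, Real.pi_pos])
  have hX : 0 ≤ Real.cos α * Real.cos β * Real.cos γ * Real.sin (2 * δ) :=
    mul_nonneg (mul_nonneg (mul_nonneg hca hcb) hcg) hs2
  have hden : (0:ℝ) < (1 + Real.cos α * Real.cos β * Real.cos γ * Real.sin (2 * δ)) ^ 2 := by
    positivity
  have hsg := Real.sin_sq_add_cos_sq γ
  have hsb := Real.sin_sq_add_cos_sq β
  have eg : Real.sin γ ^ 2 = 1 - Real.cos γ ^ 2 := by linarith
  have eb : Real.sin β ^ 2 = 1 - Real.cos β ^ 2 := by linarith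
  rw [eg] at h1
  rw [eb] at h2
  have key1 : (Real.cos α ^ 2 - Real.cos β ^ 2) * (1 - Real.cos γ ^ 2) * Real.sin (2 * δ) ^ 2 ≥ 0 :=
    mul_nonneg h1 (sq_nonneg _)
  have key2 : (Real.cos α ^ 2 - Real.cos γ ^ 2) * (1 - Real.cos β ^ 2) * Real.sin (2 * δ) ^ 2 ≥ 0 :=
    mul_nonneg h2 (sq_nonneg _)
  constructor
  · have hnum : ((Real.cos β ^ 2 - Real.cos α ^ 2 - Real.cos γ ^ 2 +
          2 * Real.cos α ^ 2 * Real.cos γ ^ 2) * Real.sin (2 * δ) ^ 2 -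
        (Real.cos α * Real.cos β * Real.cos γ * Real.sin (2 * δ)) ^ 2) ≤
        ((Real.cos α ^ 2 - Real.cos β ^ 2 - Real.cos γ ^ 2 +
          2 * Real.cos β ^ 2 * Real.cos γ ^ 2) * Real.sin (2 * δ) ^ 2 -
        (Real.cos α * Real.cos β * Real.cos γ * Real.sin (2 * δ)) ^ 2) := by nlinarith [key1]
    have := (div_le_div_iff_of_pos_right hden).mpr hnum
    linarith
  · have hnum : ((Real.cos γ ^ 2 - Real.cos α ^ 2 - Real.cos β ^ 2 +
          2 * Real.cos α ^ 2 * Real.cos β ^ 2) * Real.sin (2 * δ) ^ 2 -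
        (Real.cos α * Real.cos β * Real.cos γ * Real.sin (2 * δ)) ^ 2) ≤
        ((Real.cos α ^ 2 - Real.cos β ^ 2 - Real.cos γ ^ 2 +
          2 * Real.cos β ^ 2 * Real.cos γ ^ 2) * Real.sin (2 * δ) ^ 2 -
        (Real.cos α * Real.cos β * Real.cos γ * Real.sin (2 * δ)) ^ 2) := by nlinarith [key2]
    have := (div_le_div_iff_of_pos_right hden).mpr hnum
    linarith
end

section
/- Let α, β, γ ∈ (0, π/2], δ ∈ (0, π/4], X = cos α cos β cos γ sin(2δ). Then 1 + ((cos²α + cos²β cos²γ - 1)sin²(2δ) - X²)/(1+X)² - [1 + ((cos²α - cos²β - cos²γ + 2cos²β cos²γ)sin²(2δ) - X²)/(1+X)² - 1] = 1 - sin²β·sin²γ·sin²(2δ)/(1+X)² ≥ 0. -/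
theorem ghzR_ggm_theorem1_computation (α β γ δ : ℝ)
    (hα : α ∈ Set.Ioc 0 (Real.pi / 2)) (hβ : β ∈ Set.Ioc 0 (Real.pi / 2))
    (hγ : γ ∈ Set.Ioc 0 (Real.pi / 2)) (hδ : δ ∈ Set.Ioc 0 (Real.pi / 4)) :
    (1 + ((Real.cos α ^ 2 + Real.cos β ^ 2 * Real.cos γ ^ 2 - 1) *
            Real.sin (2 * δ) ^ 2 -
          (Real.cos α * Real.cos β * Real.cos γ * Real.sin (2 * δ)) ^ 2) /
          (1 + Real.cos α * Real.cos β * Real.cos γ * Real.sin (2 * δ)) ^ 2) -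
        (1 + ((Real.cos α ^ 2 - Real.cos β ^ 2 - Real.cos γ ^ 2 +
            2 * Real.cos β ^ 2 * Real.cos γ ^ 2) * Real.sin (2 * δ) ^ 2 -
          (Real.cos α * Real.cos β * Real.cos γ * Real.sin (2 * δ)) ^ 2) /
          (1 + Real.cos α * Real.cos β * Real.cos γ * Real.sin (2 * δ)) ^ 2 - 1) =
      1 - Real.sin β ^ 2 * Real.sin γ ^ 2 * Real.sin (2 * δ) ^ 2 /
        (1 + Real.cos α * Real.cos β * Real.cos γ * Real.sin (2 * δ)) ^ 2 ∧
    1 - Real.sin β ^ 2 * Real.sin γ ^ 2 * Real.sin (2 * δ) ^ 2 /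
        (1 + Real.cos α * Real.cos β * Real.cos γ * Real.sin (2 * δ)) ^ 2 ≥ 0 := by

  have hca : 0 ≤ Real.cos α := Real.cos_nonneg_of_mem_Icc
    ⟨by linarith [hα.1, Real.pi_pos], hα.2⟩
  have hcb : 0 ≤ Real.cos β := Real.cos_nonneg_of_mem_Icc
    ⟨by linarith [hβ.1, Real.pi_pos], hβ.2⟩
  have hcg : 0 ≤ Real.cos γ := Real.cos_nonneg_of_mem_Icc
    ⟨by linarith [hγ.1, Real.pi_pos], hγ.2⟩
  have hs : 0 ≤ Real.sin (2*δ) := Real.sin_nonneg_of_nonneg_of_le_pi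
    (by linarith [hδ.1]) (by nlinarith [hδ.2, Real.pi_pos])
  have hX : 0 ≤ Real.cos α * Real.cos β * Real.cos γ * Real.sin (2*δ) := by positivity
  set X := Real.cos α * Real.cos β * Real.cos γ * Real.sin (2*δ) with hXdef
  have hden : (1 + X)^2 ≠ 0 := by positivity
  have hden1 : (1:ℝ) ≤ (1 + X)^2 := by nlinarith
  have hsb : Real.sin β ^ 2 = 1 - Real.cos β ^ 2 := by
    have := Real.sin_sq_add_cos_sq β; linarith
  have hsg : Real.sin γ ^ 2 = 1 - Real.cos γ ^ 2 := by
    have := Real.sin_sq_add_cos_sq γ; linarith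
  constructor
  · rw [hsb, hsg]
    field_simp
    ring
  · have h1 : Real.sin β ^ 2 ≤ 1 := Real.sin_sq_le_one β
    have h2 : Real.sin γ ^ 2 ≤ 1 := Real.sin_sq_le_one γ
    have h3 : Real.sin (2*δ) ^ 2 ≤ 1 := Real.sin_sq_le_one (2*δ)
    have hnn : 0 ≤ Real.sin β ^ 2 * Real.sin γ ^ 2 * Real.sin (2*δ)^2 := by positivity
    have hA : Real.sin β ^ 2 * Real.sin γ ^ 2 ≤ 1 :=
      mul_le_one₀ h1 (sq_nonneg _) h2
    have hB : Real.sin β ^ 2 * Real.sin γ ^ 2 * Real.sin (2*δ)^2 ≤ 1 :=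
      mul_le_one₀ hA (sq_nonneg _) h3
    have : Real.sin β ^ 2 * Real.sin γ ^ 2 * Real.sin (2*δ)^2 ≤ (1+X)^2 := le_trans hB hden1
    have := div_le_one_of_le₀ this (by positivity)
    linarith
end

section
/- Let a, b, c > 0 and d ≥ 0 with a + b + c + d = 1, and let V = [(√a+√b-√c)²+d]·[(√a-√b+√c)²+d]·[(-√a+√b+√c)²+d]·[(√a+√b+√c)²+d]. Then 1 - 4(a+b)c ≥ 1/2 + (12ab - 4ac - 4bc + √V)/2 - 1, i.e., 3/2 - (4ac + 4bc + 12ab + √V)/2 ≥ 0. -/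
set_option maxHeartbeats 1000000

lemma aux_f (s c T e : ℝ) (hc : 0 ≤ c) (he : 0 ≤ e) (hT : 0 ≤ T) (hs : 0 ≤ s)
    (h4 : 4*T ≤ s^2) (hsum : s + c + e = 1) :
    1 - 2*c*s - 8*T + 16*c*s*T + 16*T^2 - 8*c*T + 8*c^2*T ≥ 0 := by
  have hs1 : s ≤ 1 := by linarith
  have hA : (c+e)*(1+s) ≤ 1 - 4*T := by nlinarith
  have hB : c*(c+e) + e*(1+s) ≤ 1 - 4*T - 2*c*s := by nlinarith
  have hce : 0 ≤ c * e := mul_nonneg hc he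
  have hA0 : 0 ≤ (c+e)*(1+s) := mul_nonneg (by linarith) (by linarith)
  have hB0 : 0 ≤ c*(c+e) + e*(1+s) := by positivity
  have hQ : ((c+e)*(1+s))*(c*(c+e)+e*(1+s)) ≤ (1-4*T)*(1-4*T-2*c*s) :=
    mul_le_mul hA hB hB0 (by linarith)
  have hL : 2*c*e*s^2 ≤ ((c+e)*(1+s))*(c*(c+e)+e*(1+s)) := by
    nlinarith [mul_nonneg hce (by nlinarith : (0:ℝ) ≤ 1 + 2*s - s^2),
      sq_nonneg (e*(1+s)),
      mul_nonneg (mul_nonneg hc hc) (mul_nonneg (by linarith : (0:ℝ) ≤ c+e) (by linarith : (0:ℝ) ≤ 1+s)),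
      mul_nonneg (mul_nonneg hc he) (mul_nonneg (by linarith : (0:ℝ) ≤ c+e) (by linarith : (0:ℝ) ≤ 1+s)),
      mul_nonneg (mul_nonneg he he) (mul_nonneg hs hs)]
  have h8 : 8*(c*e)*T ≤ 2*(c*e)*s^2 := by nlinarith [mul_le_mul_of_nonneg_left h4 hce]
  have hid : 1 - 2*c*s - 8*T + 16*c*s*T + 16*T^2 - 8*c*T + 8*c^2*T
      = (1-4*T)*(1-4*T-2*c*s) - 8*(c*e)*T := by
    have he' : e = 1 - s - c := by linarith
    rw [he']; ring
  linarith

lemma sqrt_V_le (x y z d : ℝ) (hx : 0 ≤ x) (hy : 0 ≤ y) (hz : 0 ≤ z) (hd : 0 ≤ d)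
    (hsum : x^2 + y^2 + z^2 + d = 1) :
    Real.sqrt (((x + y - z) ^ 2 + d) * (((x - y + z) ^ 2 + d) *
      (((-x + y + z) ^ 2 + d) * ((x + y + z) ^ 2 + d))))
      ≤ 3 - 4*(x^2+y^2)*z^2 - 12*x^2*y^2 := by
  have hxy2 : (0:ℝ) ≤ x^2*y^2 := by positivity
  have hf := aux_f (x^2+y^2) (z^2) (x^2*y^2) d (by positivity) hd hxy2 (by positivity)
      (by nlinarith [sq_nonneg (x^2 - y^2)]) (by linarith)
  have hR0 : (0:ℝ) ≤ 3 - 4*(x^2+y^2)*z^2 - 12*x^2*y^2 := by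
    nlinarith [sq_nonneg (x^2 - y^2), sq_nonneg (1 - x^2 - y^2), mul_nonneg hd (sq_nonneg z),
      sq_nonneg z, sq_nonneg (x^2+y^2), mul_nonneg (mul_nonneg hd hd) (sq_nonneg z)]
  have hVR : ((x + y - z) ^ 2 + d) * (((x - y + z) ^ 2 + d) *
      (((-x + y + z) ^ 2 + d) * ((x + y + z) ^ 2 + d)))
      ≤ (3 - 4*(x^2+y^2)*z^2 - 12*x^2*y^2)^2 := by
    have hd' : d = 1 - x^2 - y^2 - z^2 := by linarith
    rw [hd']
    nlinarith [hf]
  calc Real.sqrt _ ≤ Real.sqrt ((3 - 4*(x^2+y^2)*z^2 - 12*x^2*y^2)^2) := Real.sqrt_le_sqrt hVR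
    _ = _ := Real.sqrt_sq hR0

theorem wclass_ggm_theorem2_inequality (a b c d : ℝ)
    (ha : 0 < a) (hb : 0 < b) (hc : 0 < c) (hd : 0 ≤ d)
    (hsum : a + b + c + d = 1) :
    1 - 4 * (a + b) * c ≥
      1 / 2 + (12 * a * b - 4 * a * c - 4 * b * c +
        Real.sqrt (((Real.sqrt a + Real.sqrt b - Real.sqrt c) ^ 2 + d) *
          (((Real.sqrt a - Real.sqrt b + Real.sqrt c) ^ 2 + d) *
          (((-Real.sqrt a + Real.sqrt b + Real.sqrt c) ^ 2 + d) *
          ((Real.sqrt a + Real.sqrt b + Real.sqrt c) ^ 2 + d))))) / 2 - 1 ∧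
    3 / 2 - (4 * a * c + 4 * b * c + 12 * a * b +
        Real.sqrt (((Real.sqrt a + Real.sqrt b - Real.sqrt c) ^ 2 + d) *
          (((Real.sqrt a - Real.sqrt b + Real.sqrt c) ^ 2 + d) *
          (((-Real.sqrt a + Real.sqrt b + Real.sqrt c) ^ 2 + d) *
          ((Real.sqrt a + Real.sqrt b + Real.sqrt c) ^ 2 + d))))) / 2 ≥ 0 := by
  have hxa : (Real.sqrt a)^2 = a := Real.sq_sqrt ha.le
  have hyb : (Real.sqrt b)^2 = b := Real.sq_sqrt hb.le
  have hzc : (Real.sqrt c)^2 = c := Real.sq_sqrt hc.le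
  have hkey := sqrt_V_le (Real.sqrt a) (Real.sqrt b) (Real.sqrt c) d
    (Real.sqrt_nonneg a) (Real.sqrt_nonneg b) (Real.sqrt_nonneg c) hd
    (by rw [hxa, hyb, hzc]; linarith)
  rw [hxa, hyb, hzc] at hkey
  constructor <;> nlinarith [hkey, Real.sqrt_nonneg (((Real.sqrt a + Real.sqrt b - Real.sqrt c) ^ 2 + d) *
          (((Real.sqrt a - Real.sqrt b + Real.sqrt c) ^ 2 + d) *
          (((-Real.sqrt a + Real.sqrt b + Real.sqrt c) ^ 2 + d) *
          ((Real.sqrt a + Real.sqrt b + Real.sqrt c) ^ 2 + d))))]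
end

section
/- Let a, b, c > 0 and d ≥ 0 with a + b + c + d = 1, and V as above. If b ≥ c and a ≥ c, then the eigenvalue ordering λ₂ ≤ λ₁ ≤ λ₃ holds, where λ₁ = 4ab, λ₂ = 1/2 + 2(ab - ac - bc) - √V/2, λ₃ = 1/2 + 2(ab - ac - bc) + √V/2, hence M(ρ_BC) = λ₁ + λ₃ = 1/2 + (12ab - 4ac - 4bc + √V)/2. -/
theorem wclass_eigenvalue_ordering (a b c d : ℝ)
    (ha : 0 < a) (hb : 0 < b) (hc : 0 < c) (hd : 0 ≤ d)
    (hsum : a + b + c + d = 1) (hbc : b ≥ c) (hac : a ≥ c) :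
    (1 / 2 + 2 * (a * b - a * c - b * c) -
        Real.sqrt (((Real.sqrt a + Real.sqrt b - Real.sqrt c) ^ 2 + d) *
          (((Real.sqrt a - Real.sqrt b + Real.sqrt c) ^ 2 + d) *
          (((-Real.sqrt a + Real.sqrt b + Real.sqrt c) ^ 2 + d) *
          ((Real.sqrt a + Real.sqrt b + Real.sqrt c) ^ 2 + d)))) / 2 ≤
      4 * a * b) ∧
    (4 * a * b ≤
      1 / 2 + 2 * (a * b - a * c - b * c) +
        Real.sqrt (((Real.sqrt a + Real.sqrt b - Real.sqrt c) ^ 2 + d) *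
          (((Real.sqrt a - Real.sqrt b + Real.sqrt c) ^ 2 + d) *
          (((-Real.sqrt a + Real.sqrt b + Real.sqrt c) ^ 2 + d) *
          ((Real.sqrt a + Real.sqrt b + Real.sqrt c) ^ 2 + d)))) / 2) ∧
    (4 * a * b +
      (1 / 2 + 2 * (a * b - a * c - b * c) +
        Real.sqrt (((Real.sqrt a + Real.sqrt b - Real.sqrt c) ^ 2 + d) *
          (((Real.sqrt a - Real.sqrt b + Real.sqrt c) ^ 2 + d) *
          (((-Real.sqrt a + Real.sqrt b + Real.sqrt c) ^ 2 + d) *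
          ((Real.sqrt a + Real.sqrt b + Real.sqrt c) ^ 2 + d)))) / 2) =
      1 / 2 + (12 * a * b - 4 * a * c - 4 * b * c +
        Real.sqrt (((Real.sqrt a + Real.sqrt b - Real.sqrt c) ^ 2 + d) *
          (((Real.sqrt a - Real.sqrt b + Real.sqrt c) ^ 2 + d) *
          (((-Real.sqrt a + Real.sqrt b + Real.sqrt c) ^ 2 + d) *
          ((Real.sqrt a + Real.sqrt b + Real.sqrt c) ^ 2 + d))))) / 2) := by
  set x := Real.sqrt a with hxdef
  set y := Real.sqrt b with hydef
  set z := Real.sqrt c with hzdef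
  have hx : x ^ 2 = a := Real.sq_sqrt ha.le
  have hy : y ^ 2 = b := Real.sq_sqrt hb.le
  have hz : z ^ 2 = c := Real.sq_sqrt hc.le
  have hV : ((x + y - z) ^ 2 + d) * (((x - y + z) ^ 2 + d) *
      (((-x + y + z) ^ 2 + d) * ((x + y + z) ^ 2 + d))) =
      ((a + b + c + d) ^ 2 - 4 * (a * b + a * c + b * c)) ^ 2
        + 64 * (a * b * c * d) := by
    rw [← hx, ← hy, ← hz]; ring
  rw [hsum, one_pow] at hV
  have habs : |1 - 4 * (a * b + a * c + b * c)| ≤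
      Real.sqrt (((x + y - z) ^ 2 + d) * (((x - y + z) ^ 2 + d) *
      (((-x + y + z) ^ 2 + d) * ((x + y + z) ^ 2 + d)))) := by
    rw [← Real.sqrt_sq_eq_abs]
    apply Real.sqrt_le_sqrt
    rw [hV]
    nlinarith [mul_nonneg (mul_nonneg (mul_nonneg ha.le hb.le) hc.le) hd]
  obtain ⟨h1, h2⟩ := abs_le.mp habs
  refine ⟨by linarith, by linarith, by ring⟩
end

section
/- Let a, b, c > 0, d ≥ 0 with a+b+c+d = 1 and b ≥ c, a ≥ c (so that the GGM of ψ_W comes from the A:BC split). Then the complementarity relation 4G(1-G) + B ≤ 1 holds, where G = (1 - √(1 - 4(a+b)c))/2 and B = max{0, (12ab - 4ac - 4bc + √V - 1)/2} with V = [(√a+√b-√c)²+d]·[(√a-√b+√c)²+d]·[(-√a+√b+√c)²+d]·[(√a+√b+√c)²+d]. -/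
private lemma wggm_key (a b c : ℝ) (ha : 0 < a) (hb : 0 < b) (hc : 0 < c)
    (h : a + b + c ≤ 1) :
    0 ≤ 8 - 16*a*c - 16*b*c - 64*a*b - 64*a*b*c + 64*a*b*c^2 + 128*a*b^2*c
        + 128*a^2*b*c + 128*a^2*b^2 := by
  have hd : 0 ≤ 1 - a - b - c := by linarith
  have hpos : 0 ≤ 1-4*a*b + 1-(a+b)^2 - 2*c*(a+b) := by
    nlinarith [sq_nonneg (a-b), sq_nonneg (a+b+c-1), mul_pos ha hb,
      mul_nonneg hc.le (sub_nonneg.2 h)]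
  nlinarith [mul_nonneg (sq_nonneg (a-b)) hpos,
    mul_nonneg (mul_nonneg hc.le hd) (sq_nonneg (a-b)),
    mul_nonneg (mul_nonneg hc.le hd) (sq_nonneg (a+b)),
    mul_nonneg (mul_nonneg hc.le hd) (mul_nonneg (add_pos ha hb).le (sub_nonneg.2 h)),
    mul_nonneg hc.le (sq_nonneg (1-(a+b)^2-c*(a+b))),
    sq_nonneg (1-(a+b)^2-c*(a+b)),
    mul_nonneg (mul_nonneg hc.le hc.le) (sq_nonneg (a+b)),
    mul_nonneg (mul_nonneg hd hd) (sq_nonneg (a+b))]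

private lemma wggm_Vform (x y z d a b c : ℝ) (hx : x^2 = a) (hy : y^2 = b)
    (hz : z^2 = c) :
    ((x + y - z) ^ 2 + d) * (((x - y + z) ^ 2 + d) *
      (((-x + y + z) ^ 2 + d) * ((x + y + z) ^ 2 + d))) =
    ((a+b-c)^2 + 4*a*b + 2*d*(a+b+c) + d^2)^2 - 16*a*b*(a+b-c+d)^2 := by
  subst hx hy hz; ring

theorem wclass_ggm_bell_complementarity (a b c d : ℝ)
    (ha : 0 < a) (hb : 0 < b) (hc : 0 < c) (hd : 0 ≤ d)
    (hsum : a + b + c + d = 1) (hbc : b ≥ c) (hac : a ≥ c) :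
    4 * ((1 - Real.sqrt (1 - 4 * (a + b) * c)) / 2) *
        (1 - (1 - Real.sqrt (1 - 4 * (a + b) * c)) / 2) +
      max 0 ((12 * a * b - 4 * a * c - 4 * b * c +
        Real.sqrt (((Real.sqrt a + Real.sqrt b - Real.sqrt c) ^ 2 + d) *
          (((Real.sqrt a - Real.sqrt b + Real.sqrt c) ^ 2 + d) *
          (((-Real.sqrt a + Real.sqrt b + Real.sqrt c) ^ 2 + d) *
          ((Real.sqrt a + Real.sqrt b + Real.sqrt c) ^ 2 + d)))) - 1) / 2) ≤ 1 := by
  have hd' : d = 1 - a - b - c := by linarith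
  subst hd'
  have habc : a + b + c ≤ 1 := by linarith
  -- positivity of 1 - 4(a+b)c
  have h1 : 0 ≤ 1 - 4 * (a + b) * c := by nlinarith [sq_nonneg (a + b - c)]
  -- first term equals 4(a+b)c
  have hs2 : (Real.sqrt (1 - 4 * (a + b) * c)) ^ 2 = 1 - 4 * (a + b) * c :=
    Real.sq_sqrt h1
  have hFT : 4 * ((1 - Real.sqrt (1 - 4 * (a + b) * c)) / 2) *
      (1 - (1 - Real.sqrt (1 - 4 * (a + b) * c)) / 2) = 4 * (a + b) * c := by
    linear_combination (-1 : ℝ) * hs2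
  rw [hFT]
  -- rewrite V in polynomial form
  have hx : (Real.sqrt a) ^ 2 = a := Real.sq_sqrt ha.le
  have hy : (Real.sqrt b) ^ 2 = b := Real.sq_sqrt hb.le
  have hz : (Real.sqrt c) ^ 2 = c := Real.sq_sqrt hc.le
  rw [wggm_Vform (Real.sqrt a) (Real.sqrt b) (Real.sqrt c) _ a b c hx hy hz]
  set D : ℝ := 1 - a - b - c with hD
  have hR : 0 ≤ 3 - 12*a*b - 4*a*c - 4*b*c := by
    nlinarith [sq_nonneg (a - b), mul_nonneg (sub_nonneg.2 habc)
      (by linarith : (0:ℝ) ≤ 3 - (a+b)), mul_pos hc (add_pos ha hb)]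
  have hkey := wggm_key a b c ha hb hc habc
  have hVle : ((a+b-c)^2 + 4*a*b + 2*D*(a+b+c) + D^2)^2 - 16*a*b*(a+b-c+D)^2
      ≤ (3 - 12*a*b - 4*a*c - 4*b*c)^2 := by
    rw [hD]; nlinarith [hkey]
  have hsqV : Real.sqrt (((a+b-c)^2 + 4*a*b + 2*D*(a+b+c) + D^2)^2
      - 16*a*b*(a+b-c+D)^2) ≤ 3 - 12*a*b - 4*a*c - 4*b*c := by
    calc Real.sqrt (((a+b-c)^2 + 4*a*b + 2*D*(a+b+c) + D^2)^2
          - 16*a*b*(a+b-c+D)^2)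
        ≤ Real.sqrt ((3 - 12*a*b - 4*a*c - 4*b*c)^2) := Real.sqrt_le_sqrt hVle
      _ = 3 - 12*a*b - 4*a*c - 4*b*c := Real.sqrt_sq hR
  have hmax : max 0 ((12 * a * b - 4 * a * c - 4 * b * c +
      Real.sqrt (((a+b-c)^2 + 4*a*b + 2*D*(a+b+c) + D^2)^2
        - 16*a*b*(a+b-c+D)^2) - 1) / 2) ≤ 1 - 4 * (a + b) * c := by
    apply max_le h1
    linarith [hsqV]
  linarith [hmax]
end
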